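/- In any MAID graph, if agent k has perfect recall then agent k has sufficient recall; that is, if for all decision variables i, i' owned by k with i < i' one has Pa i ∪ {i} ⊆ Pa i', then the s-relevance relation restricted to agent k's decision variables admits no directed cycle. -/

import Mathlib

section DSeparation

variable {V : Type*}

/-- `IsTrail E m f u v` says that `f 0, f 1, …, f m` is a trail from `u` to `v` in the
digraph with edge relation `E`: it has length `m ≥ 1`, pairwise distinct vertices, and each
consecutive pair is joined by an edge in one direction or the other. -/
def IsTrail (E : V → V → Prop) (m : ℕ) (f : ℕ → V) (u v : V) : Prop :=
  1 ≤ m ∧ f 0 = u ∧ f m = v ∧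
    (∀ l ≤ m, ∀ l' ≤ m, f l = f l' → l = l') ∧
    ∀ l < m, E (f l) (f (l + 1)) ∨ E (f (l + 1)) (f l)

/-- The vertex at position `l` of the trail `f` is a collider: both neighbouring edges
point into it. -/
def IsColliderAt (E : V → V → Prop) (f : ℕ → V) (l : ℕ) : Prop :=
  E (f (l - 1)) (f l) ∧ E (f (l + 1)) (f l)

/-- A trail `f 0, …, f m` is blocked by the set `Z` if some intermediate vertex is either a
non-collider belonging to `Z`, or a collider that is neither in `Z` nor an ancestor of a
member of `Z`. -/
def IsBlocked (E : V → V → Prop) (Z : Set V) (m : ℕ) (f : ℕ → V) : Prop :=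
  ∃ l, 0 < l ∧ l < m ∧
    ((¬ IsColliderAt E f l ∧ f l ∈ Z) ∨
      (IsColliderAt E f l ∧ f l ∉ Z ∧ ¬ ∃ z ∈ Z, Relation.TransGen E (f l) z))

/-- `u` is d-separated from `v` by `Z`: every trail from `u` to `v` is blocked by `Z`. -/
def DSep (E : V → V → Prop) (Z : Set V) (u v : V) : Prop :=
  ∀ m f, IsTrail E m f u v → IsBlocked E Z m f

/-- The digraph obtained from `E` by adjoining one fresh vertex `none` whose only incident
edge is `none → some d`. -/
def extE (E : V → V → Prop) (d : V) : Option V → Option V → Prop := fun a b =>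
  match a, b with
  | some j, some i => E j i
  | none, some i => i = d
  | _, none => False

end DSeparation

/-- The graph of a multi-agent influence diagram: variables `Fin n` with parent sets
respecting the ordering, decision variables with owners, and utility variables for each
agent, disjoint from the decisions. -/
structure MAIDGraph (n : ℕ) (Agent : Type) [Fintype Agent] where
  Pa : Fin n → Finset (Fin n)
  pa_lt : ∀ i, ∀ j ∈ Pa i, j < i
  Dec : Finset (Fin n)
  owner : Fin n → Agent
  Ut : Agent → Finset (Fin n)
  ut_disj : ∀ k, ∀ i ∈ Ut k, i ∉ Dec

variable {n : ℕ} {Agent : Type} [Fintype Agent]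

/-- The edge relation of the DAG induced by a MAID graph: `j → i` iff `j ∈ Pa i`. -/
def MAIDGraph.E (G : MAIDGraph n Agent) : Fin n → Fin n → Prop := fun j i => j ∈ G.Pa i

/-- `Π_D` is s-reachable from `Π_{D'}` (for `D` owned by agent `k`): in the DAG extended
with a fresh mechanism vertex `π` whose only incident edge is `π → D'`, the vertex `π` is
NOT d-separated from `Ut k ∩ Desc(D)` by `{D} ∪ Pa(D)`. -/
def SReachable (G : MAIDGraph n Agent) (k : Agent) (D' D : Fin n) : Prop :=
  ¬ ∀ w : Fin n, w ∈ G.Ut k → Relation.TransGen G.E D w →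
      DSep (extE G.E D') (Option.some '' (insert D ↑(G.Pa D))) none (some w)

/-- The s-relevance relation restricted to agent `k`'s decision variables:
`D'` is related to `D` iff both are decisions owned by `k` and `Π_D` is s-reachable
from `Π_{D'}`. -/
def SRelevant (G : MAIDGraph n Agent) (k : Agent) (D' D : Fin n) : Prop :=
  D' ∈ G.Dec ∧ G.owner D' = k ∧ D ∈ G.Dec ∧ G.owner D = k ∧ SReachable G k D' D

/-- Agent `k` has sufficient recall: the s-relevance relation restricted to agent `k`'s
decision variables admits no directed cycle. -/
def SufficientRecall (G : MAIDGraph n Agent) (k : Agent) : Prop :=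
  ¬ ∃ D : Fin n, Relation.TransGen (SRelevant G k) D D

/-- Agent `k` has perfect recall: each of its decisions observes every earlier decision of
hers together with all of its parents. -/
def PerfectRecall (G : MAIDGraph n Agent) (k : Agent) : Prop :=
  ∀ i i' : Fin n, i ∈ G.Dec → i' ∈ G.Dec → G.owner i = k → G.owner i' = k → i < i' →
    insert i (G.Pa i) ⊆ G.Pa i'

theorem lt_of_desc (G : MAIDGraph n Agent) {a b : Fin n} (hd : Relation.TransGen G.E a b) :
    a < b := by
  induction hd with
  | single h1 => exact G.pa_lt _ _ h1
  | tail _ h1 ih => exact ih.trans (G.pa_lt _ _ h1)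

theorem key_lt (G : MAIDGraph n Agent) (k : Agent) (h : PerfectRecall G k)
    {D' D : Fin n} (hr : SRelevant G k D' D) : D < D' := by
  obtain ⟨hD'd, hD'o, hDd, hDo, hs⟩ := hr
  by_contra hlt
  push_neg at hlt
  apply hs
  intro w hw hdesc m f hf
  obtain ⟨hm, hf0, hfm, hinj, hedge⟩ := hf
  have hsub : insert D' (G.Pa D') ⊆ insert D (G.Pa D) := by
    rcases eq_or_lt_of_le hlt with heq | hlt'
    · subst heq
      intro x hx
      rcases Finset.mem_insert.mp hx with h1 | h1
      · exact h1 ▸ Finset.mem_insert_self _ _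
      · exact Finset.mem_insert_of_mem h1
    · intro x hx
      exact Finset.mem_insert_of_mem ((h D' D hD'd hDd hD'o hDo hlt') hx)
  have hD'Z : (D' : Fin n) ∈ (insert D ↑(G.Pa D) : Set (Fin n)) := by
    have := hsub (Finset.mem_insert_self D' (G.Pa D'))
    simpa using Finset.mem_insert.mp this
  have hPaZ : ∀ j ∈ G.Pa D', (j : Fin n) ∈ (insert D ↑(G.Pa D) : Set (Fin n)) := by
    intro j hj
    have := hsub (Finset.mem_insert_of_mem hj)
    simpa using Finset.mem_insert.mp this
  have hDw : D < w := lt_of_desc G hdesc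
  -- f 1 = some D'
  have hf1 : f 1 = some D' := by
    have h1 := hedge 0 (by omega)
    rw [hf0] at h1
    cases hc : f 1 with
    | none => rw [hc] at h1; simp [extE] at h1
    | some j =>
      rw [hc] at h1
      simp only [extE] at h1
      rcases h1 with h1 | h1
      · rw [h1]
      · exact absurd h1 (by simp)
  rcases eq_or_lt_of_le hm with hm1 | hm2
  · -- m = 1 : w = D', contradiction
    exfalso
    rw [← hm1] at hfm
    rw [hf1] at hfm
    have : D' = w := Option.some.inj hfm
    subst this
    exact absurd (hDw.trans_le hlt) (lt_irrefl D)
  -- m ≥ 2 : get f 2 = some j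
  have hf2 : ∃ j, f 2 = some j := by
    cases hc : f 2 with
    | none =>
      exfalso
      have := hinj 2 (by omega) 0 (by omega) (by rw [hc, hf0])
      omega
    | some j => exact ⟨j, rfl⟩
  obtain ⟨j, hj2⟩ := hf2
  have hedge12 := hedge 1 (by omega)
  rw [hf1, hj2] at hedge12
  simp only [extE] at hedge12
  by_cases hcol : j ∈ G.Pa D'
  · -- f 1 is a collider; consider position 2
    rcases eq_or_lt_of_le (show 2 ≤ m from hm2) with hm2' | hm3
    · -- m = 2 : w = j ∈ Pa D', contradiction
      exfalso
      rw [← hm2'] at hfm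
      rw [hj2] at hfm
      have hjw : j = w := Option.some.inj hfm
      subst hjw
      have : j < D' := G.pa_lt _ _ hcol
      exact absurd ((hDw.trans this).trans_le hlt) (lt_irrefl D)
    · -- m ≥ 3 : block at position 2 (non-collider in Z)
      refine ⟨2, by omega, by omega, Or.inl ⟨?_, ?_⟩⟩
      · intro hc
        obtain ⟨hc1, _⟩ := hc
        have : f (2 - 1) = some D' := hf1
        rw [this, hj2] at hc1
        simp only [extE] at hc1
        have h1 : j < D' := G.pa_lt _ _ hcol
        have h2 : D' < j := G.pa_lt _ _ hc1
        exact absurd (h1.trans h2) (lt_irrefl j)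
      · rw [hj2]
        exact ⟨j, hPaZ j hcol, rfl⟩
  · -- f 1 is not a collider; block at position 1
    refine ⟨1, by omega, by omega, Or.inl ⟨?_, ?_⟩⟩
    · intro hc
      obtain ⟨_, hc2⟩ := hc
      rw [hj2, hf1] at hc2
      simp only [extE] at hc2
      exact hcol hc2
    · rw [hf1]
      exact ⟨D', hD'Z, rfl⟩

/-- In any MAID graph, perfect recall implies sufficient recall. -/
theorem sufficientRecall_of_perfectRecall (G : MAIDGraph n Agent) (k : Agent)
    (h : PerfectRecall G k) : SufficientRecall G k := by
  rintro ⟨D, hD⟩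
  have : Relation.TransGen (fun a b : Fin n => b < a) D D :=
    Relation.TransGen.mono (fun a b hab => key_lt G k h hab) _ _ hD
  have htrans : Transitive (fun a b : Fin n => b < a) := fun a b c h1 h2 => h2.trans h1
  rw [@Relation.transGen_eq_self _ (fun a b : Fin n => b < a) ⟨fun _ _ _ h1 h2 => htrans h1 h2⟩] at this
  exact absurd this (lt_irrefl D)
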